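/- Boundary string identity at a single vertex: on the five-qubit space ℂ² ⊗ (ℂ²)^{⊗4} consisting of the vertex qubit at v and its four incident edge qubits, labeled 1 (edge above v), 2, 3, 4 going clockwise, set A := σ^x_1σ^x_2σ^x_3σ^x_4, Q := τ^x · exp(−iπ·τ^z·(σ^x_1 + σ^x_2 − σ^x_3 − σ^x_4)/4), and F^σ := exp(iπσ^x_1/4)·exp(iπσ^x_2/4)·exp(−iπσ^x_3/4)·exp(−iπσ^x_4/4). Then ((1+A)/2)·Q = ((1+A)/2)·F^σ·τ^x, and the orientation-reversal identity F^σ = A·(F^σ)* holds, so the identity is independent of the orientation of the boundary loop. -/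

import Mathlib

open Complex Matrix

noncomputable section

/-- The operator acting as the 2×2 matrix `M` on the qubit at site `j` of a finite qubit
system and as the identity on all other sites. -/
def localOp {S : Type*} [Fintype S] [DecidableEq S] (j : S)
    (M : Matrix (Fin 2) (Fin 2) ℂ) :
    Matrix (S → Fin 2) (S → Fin 2) ℂ :=
  Matrix.of fun f g => if ∀ k, k ≠ j → f k = g k then M (f j) (g j) else 0

/-- The Pauli `X` matrix. -/
def PX : Matrix (Fin 2) (Fin 2) ℂ := !![0, 1; 1, 0]

/-- The Pauli `Z` matrix. -/
def PZ : Matrix (Fin 2) (Fin 2) ℂ := !![1, 0; 0, -1]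

/-- Operators on the five-qubit space `ℂ² ⊗ (ℂ²)^{⊗4}` of the vertex qubit (site `0`) and
its four incident edge qubits (sites `1,2,3,4`, labeled with `1` the edge above the vertex
and going clockwise). -/
abbrev Op5 := Matrix (Fin 5 → Fin 2) (Fin 5 → Fin 2) ℂ

/-- `τ^x`, Pauli `X` on the vertex qubit. -/
def tx5 : Op5 := localOp 0 PX

/-- `τ^z`, Pauli `Z` on the vertex qubit. -/
def tz5 : Op5 := localOp 0 PZ

/-- `σ^x_k`, Pauli `X` on the edge qubit `k ∈ {1,2,3,4}`. -/
def sx5 (k : Fin 5) : Op5 := localOp k PX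

/-- The star operator `A := σ^x_1σ^x_2σ^x_3σ^x_4`. -/
def A5 : Op5 := sx5 1 * sx5 2 * sx5 3 * sx5 4

/-- `Q := τ^x · exp(−iπ·τ^z·(σ^x_1 + σ^x_2 − σ^x_3 − σ^x_4)/4)`. -/
def Q5 : Op5 :=
  tx5 * NormedSpace.exp ((-((Real.pi : ℂ) * Complex.I) / 4) •
    (tz5 * (sx5 1 + sx5 2 - sx5 3 - sx5 4)))

/-- The symmetry-erasing string operator around the dual loop enclosing the vertex:
`F^σ := exp(iπσ^x_1/4)·exp(iπσ^x_2/4)·exp(−iπσ^x_3/4)·exp(−iπσ^x_4/4)`. -/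
def Fσ5 : Op5 :=
  NormedSpace.exp (((Real.pi : ℂ) * Complex.I / 4) • sx5 1) *
    NormedSpace.exp (((Real.pi : ℂ) * Complex.I / 4) • sx5 2) *
    NormedSpace.exp ((-((Real.pi : ℂ) * Complex.I) / 4) • sx5 3) *
    NormedSpace.exp ((-((Real.pi : ℂ) * Complex.I) / 4) • sx5 4)

-- ===== auxiliary material =====

section LocalOpLemmas

variable {S : Type*} [Fintype S] [DecidableEq S]

lemma sum_update_aux (j : S) (f : S → Fin 2) (F : (S → Fin 2) → ℂ)
    (hF : ∀ h : S → Fin 2, (∃ k, k ≠ j ∧ h k ≠ f k) → F h = 0) :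
    ∑ h : S → Fin 2, F h = ∑ x : Fin 2, F (Function.update f j x) := by
  classical
  rw [show (∑ h : S → Fin 2, F h) = ∑ h ∈ Finset.univ.image (Function.update f j), F h by
    symm
    apply Finset.sum_subset (Finset.subset_univ _)
    intro h _ hn
    apply hF
    by_contra hc
    push_neg at hc
    exact hn (Finset.mem_image.2 ⟨h j, Finset.mem_univ _, by
      funext k
      by_cases hk : k = j
      · subst hk; simp
      · rw [Function.update_of_ne hk]
        exact (hc k hk).symm⟩)]
  rw [Finset.sum_image (fun x _ y _ hxy => Function.update_injective f j hxy)]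

lemma localOp_mul_same (j : S) (M N : Matrix (Fin 2) (Fin 2) ℂ) :
    localOp j M * localOp j N = localOp j (M * N) := by
  ext f g
  rw [Matrix.mul_apply]
  rw [sum_update_aux j f _ (by
    intro h ⟨k, hk, hne⟩
    have : localOp j M f h = 0 := by
      simp only [localOp, Matrix.of_apply]
      rw [if_neg]
      push_neg
      exact ⟨k, hk, fun he => hne he.symm⟩
    rw [this, zero_mul])]
  by_cases hfg : ∀ k, k ≠ j → f k = g k
  · have h1 : ∀ x : Fin 2, localOp j M f (Function.update f j x) = M (f j) x := by
      intro x
      simp only [localOp, Matrix.of_apply]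
      rw [if_pos (fun k hk => (Function.update_of_ne hk _ _).symm), Function.update_self]
    have h2 : ∀ x : Fin 2, localOp j N (Function.update f j x) g = N x (g j) := by
      intro x
      simp only [localOp, Matrix.of_apply]
      rw [if_pos (fun k hk => by rw [Function.update_of_ne hk]; exact hfg k hk),
        Function.update_self]
    rw [Finset.sum_congr rfl (fun x _ => by rw [h1, h2])]
    simp only [localOp, Matrix.of_apply]
    rw [if_pos hfg, Matrix.mul_apply]
  · have h2 : ∀ x : Fin 2, localOp j N (Function.update f j x) g = 0 := by
      intro x
      simp only [localOp, Matrix.of_apply]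
      rw [if_neg]
      intro hc
      exact hfg (fun k hk => by rw [← hc k hk, Function.update_of_ne hk])
    rw [Finset.sum_congr rfl (fun x _ => by rw [h2, mul_zero]), Finset.sum_const_zero]
    simp only [localOp, Matrix.of_apply]
    rw [if_neg hfg]

lemma localOp_mul_apply_ne {j k : S} (hjk : j ≠ k) (M N : Matrix (Fin 2) (Fin 2) ℂ)
    (f g : S → Fin 2) :
    (localOp j M * localOp k N) f g =
      if ∀ l, l ≠ j → l ≠ k → f l = g l then M (f j) (g j) * N (f k) (g k) else 0 := by
  rw [Matrix.mul_apply]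
  rw [Finset.sum_eq_single (Function.update f j (g j))]
  · simp only [localOp, Matrix.of_apply]
    rw [if_pos (fun l hl => (Function.update_of_ne hl _ f).symm), Function.update_self,
      Function.update_of_ne (Ne.symm hjk)]
    by_cases hc : ∀ l, l ≠ j → l ≠ k → f l = g l
    · rw [if_pos, if_pos hc]
      intro l hl
      by_cases hlj : l = j
      · subst hlj; simp
      · rw [Function.update_of_ne hlj]; exact hc l hlj hl
    · rw [if_neg, if_neg hc, mul_zero]
      intro hd
      apply hc
      intro l hlj hlk
      have := hd l hlk
      rwa [Function.update_of_ne hlj] at this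
  · intro h _ hne
    simp only [localOp, Matrix.of_apply]
    by_cases h1 : ∀ l, l ≠ j → f l = h l
    · by_cases h2 : ∀ l, l ≠ k → h l = g l
      · exfalso
        apply hne
        funext l
        by_cases hlj : l = j
        · rw [hlj, Function.update_self]; exact h2 j hjk
        · rw [Function.update_of_ne hlj]; exact (h1 l hlj).symm
      · rw [if_neg h2, mul_zero]
    · rw [if_neg h1, zero_mul]
  · intro hn
    exact absurd (Finset.mem_univ _) hn

lemma localOp_mul_comm {j k : S} (hjk : j ≠ k) (M N : Matrix (Fin 2) (Fin 2) ℂ) :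
    localOp j M * localOp k N = localOp k N * localOp j M := by
  ext f g
  rw [localOp_mul_apply_ne hjk, localOp_mul_apply_ne (Ne.symm hjk)]
  have hiff : (∀ l, l ≠ j → l ≠ k → f l = g l) ↔ (∀ l, l ≠ k → l ≠ j → f l = g l) :=
    ⟨fun h l h1 h2 => h l h2 h1, fun h l h1 h2 => h l h2 h1⟩
  rw [if_congr hiff (mul_comm _ _) rfl]

lemma localOp_one (j : S) : localOp j (1 : Matrix (Fin 2) (Fin 2) ℂ) = 1 := by
  ext f g
  simp only [localOp, Matrix.of_apply, Matrix.one_apply]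
  by_cases hfg : f = g
  · subst hfg; simp
  · rw [if_neg hfg]
    by_cases hc : ∀ k, k ≠ j → f k = g k
    · rw [if_pos hc, if_neg]
      intro hj
      exact hfg (funext fun k => by
        by_cases hk : k = j
        · subst hk; exact hj
        · exact hc k hk)
    · rw [if_neg hc]

lemma localOp_neg (j : S) (M : Matrix (Fin 2) (Fin 2) ℂ) :
    localOp j (-M) = -(localOp j M) := by
  ext f g
  simp only [localOp, Matrix.of_apply, Matrix.neg_apply]
  split <;> simp

lemma localOp_conjTranspose (j : S) (M : Matrix (Fin 2) (Fin 2) ℂ) :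
    (localOp j M)ᴴ = localOp j Mᴴ := by
  ext f g
  simp only [Matrix.conjTranspose_apply, localOp, Matrix.of_apply]
  have hiff : (∀ k, k ≠ j → g k = f k) ↔ (∀ k, k ≠ j → f k = g k) :=
    ⟨fun h k hk => (h k hk).symm, fun h k hk => (h k hk).symm⟩
  by_cases hc : ∀ k, k ≠ j → f k = g k
  · rw [if_pos (hiff.2 hc), if_pos hc]
  · rw [if_neg (fun hc' => hc (hiff.1 hc')), if_neg hc, star_zero]

end LocalOpLemmas

lemma PX_mul_PX : PX * PX = 1 := by
  rw [PX, Matrix.mul_fin_two, Matrix.one_fin_two]; norm_num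

lemma PZ_mul_PZ : PZ * PZ = 1 := by
  rw [PZ, Matrix.mul_fin_two, Matrix.one_fin_two]; norm_num

lemma PX_mul_PZ : PX * PZ = -(PZ * PX) := by
  rw [PX, PZ, Matrix.mul_fin_two, Matrix.mul_fin_two]
  norm_num

lemma PX_conjTranspose : PXᴴ = PX := by
  rw [PX]; ext i j; fin_cases i <;> fin_cases j <;> simp [Matrix.conjTranspose_apply]

section ExpLemmas

variable {m : Type*} [Fintype m] [DecidableEq m]

lemma exp_idem (Q : Matrix m m ℂ) (h : Q * Q = Q) (a : ℂ) :
    NormedSpace.exp (a • Q) = 1 + (Complex.exp a - 1) • Q := by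
  letI : SeminormedRing (Matrix m m ℂ) := Matrix.linftyOpSemiNormedRing
  letI : NormedRing (Matrix m m ℂ) := Matrix.linftyOpNormedRing
  letI : NormedAlgebra ℂ (Matrix m m ℂ) := Matrix.linftyOpNormedAlgebra
  have hpow : ∀ n : ℕ, (a • Q) ^ (n + 1) = a ^ (n + 1) • Q := by
    intro n
    induction n with
    | zero => simp
    | succ n ih =>
        rw [pow_succ, ih, smul_mul_assoc, mul_smul_comm, h, smul_smul, ← pow_succ]
  have hs : Summable (fun n : ℕ => ((n.factorial : ℂ))⁻¹ • (a • Q) ^ n) :=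
    NormedSpace.expSeries_summable' (𝕂 := ℂ) (a • Q)
  have hsc : Summable (fun n : ℕ => ((n.factorial : ℂ))⁻¹ • a ^ n) :=
    NormedSpace.expSeries_summable' (𝕂 := ℂ) a
  have hsc' : Summable (fun n : ℕ => (((n + 1).factorial : ℂ))⁻¹ * a ^ (n + 1)) := by
    have := (summable_nat_add_iff 1).2 hsc
    simpa [smul_eq_mul] using this
  rw [NormedSpace.exp_eq_tsum (𝕂 := ℂ)]
  beta_reduce
  rw [Summable.tsum_eq_zero_add hs]
  simp only [hpow, pow_zero, Nat.factorial_zero, Nat.cast_one, inv_one, one_smul]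
  congr 1
  have : (fun n : ℕ => (((n + 1).factorial : ℂ))⁻¹ • (a ^ (n + 1) • Q))
      = fun n : ℕ => ((((n + 1).factorial : ℂ))⁻¹ * a ^ (n + 1)) • Q := by
    funext n; rw [smul_smul]
  rw [this, Summable.tsum_smul_const hsc']
  congr 1
  have hexp : Complex.exp a = ∑' n : ℕ, ((n.factorial : ℂ))⁻¹ • a ^ n := by
    rw [Complex.exp_eq_exp_ℂ, NormedSpace.exp_eq_tsum (𝕂 := ℂ)]
  rw [hexp, Summable.tsum_eq_zero_add hsc]
  simp [smul_eq_mul]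

lemma exp_inv (P : Matrix m m ℂ) (h : P * P = 1) (c : ℂ) :
    NormedSpace.exp (c • P) =
      ((Complex.exp c + Complex.exp (-c)) / 2) • 1 +
        ((Complex.exp c - Complex.exp (-c)) / 2) • P := by
  have hQ : ((2 : ℂ)⁻¹ • (1 + P)) * ((2 : ℂ)⁻¹ • (1 + P)) = (2 : ℂ)⁻¹ • (1 + P) := by
    rw [smul_mul_assoc, mul_smul_comm, smul_smul, add_mul, mul_add, mul_add, h]
    rw [one_mul, mul_one, one_mul]
    match_scalars <;> ring
  have key : c • P = (2 * c) • ((2 : ℂ)⁻¹ • (1 + P)) + (-c) • (1 : Matrix m m ℂ) := by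
    rw [smul_smul]
    match_scalars <;> ring
  have hcomm : Commute ((2 * c) • ((2 : ℂ)⁻¹ • (1 + P))) ((-c) • (1 : Matrix m m ℂ)) :=
    ((Commute.one_right _).smul_right _).smul_left _
  rw [key, Matrix.exp_add_of_commute _ _ hcomm, exp_idem _ hQ, exp_idem 1 (by simp) (-c)]
  have e2 : Complex.exp (2 * c) = Complex.exp c * Complex.exp c := by
    rw [two_mul, Complex.exp_add]
  rw [e2]
  simp only [mul_add, add_mul, mul_one, one_mul, smul_add, smul_smul, mul_smul_comm,
    smul_mul_assoc, Matrix.mul_one, Matrix.one_mul]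
  have em : Complex.exp (-c) * Complex.exp c = 1 := by
    rw [← Complex.exp_add]; simp
  match_scalars <;>
    linear_combination (Complex.exp c / 2) * em

end ExpLemmas

/-- central imaginary unit operator -/
def iOp : Op5 := Complex.I • (1 : Op5)

/-- the constant `√2/2`. -/
def uC : ℂ := ((Real.sqrt 2 / 2 : ℝ) : ℂ)

lemma exp_quarter_pos (P : Op5) (h : P * P = 1) :
    NormedSpace.exp (((Real.pi : ℂ) * Complex.I / 4) • P) = uC • 1 + uC • (iOp * P) := by
  rw [exp_inv P h]
  have h1 : Complex.exp ((Real.pi : ℂ) * Complex.I / 4) = uC + uC * Complex.I := by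
    rw [show ((Real.pi : ℂ) * Complex.I / 4) = ((Real.pi / 4 : ℝ) : ℂ) * Complex.I by
      push_cast; ring]
    rw [Complex.exp_mul_I, ← Complex.ofReal_cos, ← Complex.ofReal_sin,
      Real.cos_pi_div_four, Real.sin_pi_div_four]
    rfl
  have h2 : Complex.exp (-((Real.pi : ℂ) * Complex.I / 4)) = uC - uC * Complex.I := by
    rw [show (-((Real.pi : ℂ) * Complex.I / 4)) = ((-(Real.pi / 4) : ℝ) : ℂ) * Complex.I by
      push_cast; ring]
    rw [Complex.exp_mul_I, ← Complex.ofReal_cos, ← Complex.ofReal_sin,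
      Real.cos_neg, Real.sin_neg, Real.cos_pi_div_four, Real.sin_pi_div_four]
    simp only [uC]
    push_cast
    ring
  rw [h1, h2]
  have hiP : iOp * P = Complex.I • P := by
    rw [iOp, smul_mul_assoc, one_mul]
  rw [hiP, smul_smul]
  match_scalars <;> ring

lemma exp_quarter_neg (P : Op5) (h : P * P = 1) :
    NormedSpace.exp ((-((Real.pi : ℂ) * Complex.I) / 4) • P) = uC • 1 - uC • (iOp * P) := by
  have harg : (-((Real.pi : ℂ) * Complex.I) / 4) = -((Real.pi : ℂ) * Complex.I / 4) := by ring
  rw [harg, exp_inv P h]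
  have h1 : Complex.exp ((Real.pi : ℂ) * Complex.I / 4) = uC + uC * Complex.I := by
    rw [show ((Real.pi : ℂ) * Complex.I / 4) = ((Real.pi / 4 : ℝ) : ℂ) * Complex.I by
      push_cast; ring]
    rw [Complex.exp_mul_I, ← Complex.ofReal_cos, ← Complex.ofReal_sin,
      Real.cos_pi_div_four, Real.sin_pi_div_four]
    rfl
  have h2 : Complex.exp (-((Real.pi : ℂ) * Complex.I / 4)) = uC - uC * Complex.I := by
    rw [show (-((Real.pi : ℂ) * Complex.I / 4)) = ((-(Real.pi / 4) : ℝ) : ℂ) * Complex.I by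
      push_cast; ring]
    rw [Complex.exp_mul_I, ← Complex.ofReal_cos, ← Complex.ofReal_sin,
      Real.cos_neg, Real.sin_neg, Real.cos_pi_div_four, Real.sin_pi_div_four]
    simp only [uC]
    push_cast
    ring
  rw [neg_neg, h1, h2]
  have hiP : iOp * P = Complex.I • P := by
    rw [iOp, smul_mul_assoc, one_mul]
  rw [hiP, smul_smul]
  match_scalars <;> ring

-- generic commutation helpers
lemma mulc {a b : Op5} (h : a * b = b * a) (x : Op5) : a * (b * x) = b * (a * x) := by
  rw [← mul_assoc, h, mul_assoc]

lemma sqc {a : Op5} (h : a * a = 1) (x : Op5) : a * (a * x) = x := by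
  rw [← mul_assoc, h, one_mul]

lemma antic {a b : Op5} (h : a * b = -(b * a)) (x : Op5) : a * (b * x) = -(b * (a * x)) := by
  rw [← mul_assoc, h, neg_mul, mul_assoc]

-- concrete relations
lemma z_sq : tz5 * tz5 = 1 := by
  rw [tz5, localOp_mul_same, PZ_mul_PZ, localOp_one]
lemma t_sq : tx5 * tx5 = 1 := by
  rw [tx5, localOp_mul_same, PX_mul_PX, localOp_one]
lemma s_sq (k : Fin 5) : sx5 k * sx5 k = 1 := by
  rw [sx5, localOp_mul_same, PX_mul_PX, localOp_one]

lemma s_z (k : Fin 5) (hk : k ≠ 0) : sx5 k * tz5 = tz5 * sx5 k := by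
  rw [sx5, tz5, localOp_mul_comm hk]
lemma s_t (k : Fin 5) (hk : k ≠ 0) : sx5 k * tx5 = tx5 * sx5 k := by
  rw [sx5, tx5, localOp_mul_comm hk]
lemma t_z : tx5 * tz5 = -(tz5 * tx5) := by
  rw [tx5, tz5, localOp_mul_same, PX_mul_PZ, localOp_neg, localOp_mul_same]
lemma s_s {j k : Fin 5} (hjk : j ≠ k) : sx5 j * sx5 k = sx5 k * sx5 j := by
  simp only [sx5]
  exact localOp_mul_comm hjk _ _

-- iOp facts
lemma iOp_central (X : Op5) : X * iOp = iOp * X := by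
  rw [iOp, mul_smul_comm, mul_one, smul_mul_assoc, one_mul]
lemma iOp_central' (X Y : Op5) : X * (iOp * Y) = iOp * (X * Y) := by
  rw [← mul_assoc, iOp_central, mul_assoc]
lemma iOp_sq : iOp * iOp = -1 := by
  rw [iOp, smul_mul_assoc, one_mul, smul_smul, Complex.I_mul_I, neg_smul, one_smul]
lemma iOp_sqc (x : Op5) : iOp * (iOp * x) = -x := by
  rw [← mul_assoc, iOp_sq, neg_mul, one_mul]

lemma iOp_H : iOpᴴ = -iOp := by
  rw [iOp, Matrix.conjTranspose_smul, Matrix.conjTranspose_one]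
  simp [Complex.star_def, Complex.conj_I]

lemma sx5_H (k : Fin 5) : (sx5 k)ᴴ = sx5 k := by
  rw [sx5, localOp_conjTranspose, PX_conjTranspose]

lemma uC_star : star uC = uC := by
  simp [uC, Complex.star_def, Complex.conj_ofReal]

lemma tzs_mul (i : Fin 5) (hi : i ≠ 0) (j : Fin 5) (hj : j ≠ 0) :
    (tz5 * sx5 i) * (tz5 * sx5 j) = sx5 i * sx5 j := by
  rw [mul_assoc, ← mul_assoc (sx5 i), s_z i hi, ← mul_assoc, ← mul_assoc, z_sq, one_mul]

lemma tzs_inv (k : Fin 5) (hk : k ≠ 0) : (tz5 * sx5 k) * (tz5 * sx5 k) = 1 := by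
  rw [tzs_mul k hk k hk, s_sq]

lemma tzs_comm (i : Fin 5) (hi : i ≠ 0) (j : Fin 5) (hj : j ≠ 0) :
    Commute (tz5 * sx5 i) (tz5 * sx5 j) := by
  unfold Commute SemiconjBy
  rcases eq_or_ne i j with rfl | hij
  · rfl
  · rw [tzs_mul i hi j hj, tzs_mul j hj i hi, s_s hij]

set_option maxHeartbeats 4000000 in
/-- **boundary string identity at a single vertex.**
`((1+A)/2)·Q = ((1+A)/2)·F^σ·τ^x`, together with the orientation-reversal identity
`F^σ = A·(F^σ)*`, so the identity is independent of the orientation of the boundary loop. -/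
theorem boundary_string_identity_single_vertex :
    ((2 : ℂ)⁻¹ • ((1 : Op5) + A5)) * Q5 = ((2 : ℂ)⁻¹ • ((1 : Op5) + A5)) * Fσ5 * tx5 ∧
      Fσ5 = A5 * Fσ5ᴴ := by
  have h10 : (1 : Fin 5) ≠ 0 := by decide
  have h20 : (2 : Fin 5) ≠ 0 := by decide
  have h30 : (3 : Fin 5) ≠ 0 := by decide
  have h40 : (4 : Fin 5) ≠ 0 := by decide
  have s21 : sx5 2 * sx5 1 = sx5 1 * sx5 2 := s_s (by decide)
  have s31 : sx5 3 * sx5 1 = sx5 1 * sx5 3 := s_s (by decide)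
  have s41 : sx5 4 * sx5 1 = sx5 1 * sx5 4 := s_s (by decide)
  have s32 : sx5 3 * sx5 2 = sx5 2 * sx5 3 := s_s (by decide)
  have s42 : sx5 4 * sx5 2 = sx5 2 * sx5 4 := s_s (by decide)
  have s43 : sx5 4 * sx5 3 = sx5 3 * sx5 4 := s_s (by decide)
  have t_s : ∀ k : Fin 5, k ≠ 0 → tx5 * sx5 k = sx5 k * tx5 := fun k hk => (s_t k hk).symm
  have hF : Fσ5 = (uC • 1 + uC • (iOp * sx5 1)) * (uC • 1 + uC • (iOp * sx5 2)) *
      (uC • 1 - uC • (iOp * sx5 3)) * (uC • 1 - uC • (iOp * sx5 4)) := by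
    rw [Fσ5, exp_quarter_pos _ (s_sq 1), exp_quarter_pos _ (s_sq 2),
      exp_quarter_neg _ (s_sq 3), exp_quarter_neg _ (s_sq 4)]
  have K : ∀ (a b : ℂ) (i j : Fin 5), i ≠ 0 → j ≠ 0 →
      Commute (a • (tz5 * sx5 i)) (b • (tz5 * sx5 j)) := fun a b i j hi hj =>
    ((tzs_comm i hi j hj).smul_right b).smul_left a
  have hQ : Q5 = tx5 * ((uC • 1 - uC • (iOp * (tz5 * sx5 1))) *
      ((uC • 1 - uC • (iOp * (tz5 * sx5 2))) *
      ((uC • 1 + uC • (iOp * (tz5 * sx5 3))) * (uC • 1 + uC • (iOp * (tz5 * sx5 4)))))) := by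
    rw [Q5]
    congr 1
    rw [show (-((Real.pi : ℂ) * Complex.I) / 4) • (tz5 * (sx5 1 + sx5 2 - sx5 3 - sx5 4))
        = (-((Real.pi : ℂ) * Complex.I) / 4) • (tz5 * sx5 1)
          + ((-((Real.pi : ℂ) * Complex.I) / 4) • (tz5 * sx5 2)
          + (((Real.pi : ℂ) * Complex.I / 4) • (tz5 * sx5 3)
          + ((Real.pi : ℂ) * Complex.I / 4) • (tz5 * sx5 4))) by
      rw [mul_sub, mul_sub, mul_add]
      module]
    rw [Matrix.exp_add_of_commute _ _
        ((K _ _ 1 2 h10 h20).add_right ((K _ _ 1 3 h10 h30).add_right (K _ _ 1 4 h10 h40))),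
      Matrix.exp_add_of_commute _ _
        ((K _ _ 2 3 h20 h30).add_right (K _ _ 2 4 h20 h40)),
      Matrix.exp_add_of_commute _ _ (K _ _ 3 4 h30 h40),
      exp_quarter_neg _ (tzs_inv 1 h10), exp_quarter_neg _ (tzs_inv 2 h20),
      exp_quarter_pos _ (tzs_inv 3 h30), exp_quarter_pos _ (tzs_inv 4 h40)]
  constructor
  · rw [hQ, hF, A5]
    simp only [mul_add, add_mul, sub_mul, mul_sub, mul_one, one_mul, mul_neg, neg_mul,
      neg_neg, smul_add, smul_sub, smul_neg, smul_mul_assoc, mul_smul_comm, smul_smul,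
      mul_assoc, iOp_central, iOp_central', iOp_sq, iOp_sqc, z_sq, sqc z_sq,
      s_sq, sqc (s_sq 1), sqc (s_sq 2), sqc (s_sq 3), sqc (s_sq 4),
      s_z 1 h10, s_z 2 h20, s_z 3 h30, s_z 4 h40,
      mulc (s_z 1 h10), mulc (s_z 2 h20), mulc (s_z 3 h30), mulc (s_z 4 h40),
      t_z, antic t_z, t_s 1 h10, t_s 2 h20, t_s 3 h30, t_s 4 h40,
      mulc (t_s 1 h10), mulc (t_s 2 h20), mulc (t_s 3 h30), mulc (t_s 4 h40),
      s21, s31, s41, s32, s42, s43,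
      mulc s21, mulc s31, mulc s41, mulc s32, mulc s42, mulc s43]
    module
  · rw [hF, A5]
    simp only [Matrix.conjTranspose_mul, Matrix.conjTranspose_smul,
      Matrix.conjTranspose_add, Matrix.conjTranspose_sub, Matrix.conjTranspose_one,
      iOp_H, sx5_H, uC_star]
    simp only [mul_add, add_mul, sub_mul, mul_sub, mul_one, one_mul, mul_neg, neg_mul,
      neg_neg, smul_add, smul_sub, smul_neg, smul_mul_assoc, mul_smul_comm, smul_smul,
      mul_assoc, iOp_central, iOp_central', iOp_sq, iOp_sqc,
      s_sq, sqc (s_sq 1), sqc (s_sq 2), sqc (s_sq 3), sqc (s_sq 4),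
      s21, s31, s41, s32, s42, s43,
      mulc s21, mulc s31, mulc s41, mulc s32, mulc s42, mulc s43]
    module


end
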